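/- If T is a minimal counterexample to Vaught's conjecture, then there is a club of ordinals C ⊆ ω₁ such that for every α ∈ C, any two countable models of T of Scott rank at least α are Σ^in_β-elementary equivalent for all β < α. -/

import Mathlib

attribute [local instance] Classical.propDecidable

noncomputable section

/-! ## Basic oracle computability on Cantor space -/

abbrev Cantor := ℕ → Bool

/-- Kleene-style partial recursion relative to an oracle `O`. -/
inductive RecursiveInOracle (O : ℕ →. ℕ) : (ℕ →. ℕ) → Prop
  | oracle : RecursiveInOracle O O
  | zero : RecursiveInOracle O (pure 0)
  | succ : RecursiveInOracle O Nat.succ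
  | left : RecursiveInOracle O ↑fun n : ℕ => n.unpair.1
  | right : RecursiveInOracle O ↑fun n : ℕ => n.unpair.2
  | pair {f g} : RecursiveInOracle O f → RecursiveInOracle O g →
      RecursiveInOracle O fun n => Nat.pair <$> f n <*> g n
  | comp {f g} : RecursiveInOracle O f → RecursiveInOracle O g →
      RecursiveInOracle O fun n => g n >>= f
  | prec {f g} : RecursiveInOracle O f → RecursiveInOracle O g →
      RecursiveInOracle O (Nat.unpaired fun a n =>
        n.rec (f a) fun y IH => do let i ← IH; g (Nat.pair a (Nat.pair y i)))
  | rfind {f} : RecursiveInOracle O f →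
      RecursiveInOracle O fun a => Nat.rfind fun n => (fun m => m = 0) <$> f (Nat.pair a n)

def asOracle (X : Cantor) : ℕ →. ℕ := fun n => Part.some (cond (X n) 1 0)

/-- `TRed X Y` : `X` is Turing reducible to `Y` (`X ≤_T Y`). -/
def TRed (X Y : Cantor) : Prop := RecursiveInOracle (asOracle Y) (asOracle X)

/-- Turing equivalence. -/
def TEquiv (X Y : Cantor) : Prop := TRed X Y ∧ TRed Y X

/-- Turing join `X ⊕ Y`. -/
def joinC (X Y : Cantor) : Cantor := fun n => if n % 2 = 0 then X (n / 2) else Y (n / 2)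

def evens (Z : Cantor) : Cantor := fun n => Z (2 * n)
def odds (Z : Cantor) : Cantor := fun n => Z (2 * n + 1)

/-- `X` is (outright) computable. -/
def ComputableC (X : Cantor) : Prop := TRed X fun _ => false

/-! ## Ordinals computable in an oracle; `ω₁^X` -/

/-- The strict order relation on the field coded by `r` (as a set of codes of pairs). -/
def relOf (r : Cantor) :
    {n : ℕ // r (Nat.pair n n) = true} → {n : ℕ // r (Nat.pair n n) = true} → Prop :=
  fun a b => r (Nat.pair a.1 b.1) = true ∧ a.1 ≠ b.1

/-- `r` codes a well-ordering of order type `α`. -/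
def CodesOrdinal (r : Cantor) (α : Ordinal) : Prop :=
  ∃ h : IsWellOrder _ (relOf r), @Ordinal.type _ (relOf r) h = α

/-- `ω₁^X`: the least ordinal with no `X`-computable copy. -/
def omega1C (X : Cantor) : Ordinal :=
  sInf {α : Ordinal | ¬ ∃ r : Cantor, TRed r X ∧ CodesOrdinal r α}

/-- `α` is admissible: of the form `ω₁^X`. -/
def AdmissibleOrd (α : Ordinal) : Prop := ∃ X : Cantor, omega1C X = α

/-! ## Projective sets and projective determinacy -/

/-- Projective subsets of Cantor space. -/
inductive ProjectiveSet : Set Cantor → Prop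
  | borel {s : Set Cantor} : MeasurableSet s → ProjectiveSet s
  | compl {s} : ProjectiveSet s → ProjectiveSet sᶜ
  | proj {s} : ProjectiveSet s → ProjectiveSet {X | ∃ Y : Cantor, joinC X Y ∈ s}

/-- A function `2^ω → 2^ω` is projective if its graph is. -/
def ProjFun (g : Cantor → Cantor) : Prop := ProjectiveSet {Z | odds Z = g (evens Z)}

/-- History of a play of the Gale–Stewart game where I follows `σ`, II follows `τ`. -/
def histAux (σ τ : List Bool → Bool) : ℕ → List Bool
  | 0 => []
  | n + 1 => histAux σ τ n ++ [if n % 2 = 0 then σ (histAux σ τ n) else τ (histAux σ τ n)]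

/-- The infinite play produced by strategies `σ` (player I) and `τ` (player II). -/
def play (σ τ : List Bool → Bool) : Cantor :=
  fun n => if n % 2 = 0 then σ (histAux σ τ n) else τ (histAux σ τ n)

/-- The game with payoff `A` is determined. -/
def DeterminedG (A : Set Cantor) : Prop :=
  (∃ σ, ∀ τ, play σ τ ∈ A) ∨ (∃ τ, ∀ σ, play σ τ ∉ A)

/-- Projective determinacy. -/
def PD : Prop := ∀ A : Set Cantor, ProjectiveSet A → DeterminedG A

/-! ## Trees on `2^{<ω}` -/

def seg (Y : Cantor) (n : ℕ) : List Bool := (List.range n).map Y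

def IsTree (P : List Bool → Bool) : Prop :=
  P [] = true ∧ ∀ σ b, P (σ ++ [b]) = true → P σ = true

def IsPathT (P : List Bool → Bool) (Y : Cantor) : Prop := ∀ n, P (seg Y n) = true

def IsSplit (P : List Bool → Bool) (σ : List Bool) : Prop :=
  P (σ ++ [false]) = true ∧ P (σ ++ [true]) = true

def PerfectT (P : List Bool → Bool) : Prop :=
  ∀ σ, P σ = true → ∃ τ, σ <+: τ ∧ IsSplit P τ

def PrunedT (P : List Bool → Bool) : Prop :=
  ∀ σ, P σ = true → P (σ ++ [false]) = true ∨ P (σ ++ [true]) = true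

/-- The tree as an element of Cantor space (via coding of finite strings). -/
def treeSet (P : List Bool → Bool) : Cantor := fun n =>
  match (Encodable.decode n : Option (List Bool)) with
  | some σ => P σ
  | none => false

/-- A perfect (pruned) tree all of whose paths compute it. -/
def PointedT (P : List Bool → Bool) : Prop :=
  IsTree P ∧ PrunedT P ∧ PerfectT P ∧ ∀ Y, IsPathT P Y → TRed (treeSet P) Y

/-- Number of splitting levels of `P` along `Y` below `k`. -/
def splitsBelow (P : List Bool → Bool) (Y : Cantor) (k : ℕ) : ℕ :=
  ((List.range k).filter fun j => decide (IsSplit P (seg Y j))).length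

/-- `Y` is the path of `P` obtained by following `X` at every split of `P`. -/
def FollowsT (P : List Bool → Bool) (X Y : Cantor) : Prop :=
  IsPathT P Y ∧ (∀ n, ∃ k, n ≤ k ∧ IsSplit P (seg Y k)) ∧
    ∀ k, IsSplit P (seg Y k) → Y k = X (splitsBelow P Y k)

/-! ## Countable structures and infinitary logic -/

/-- A structure on domain `ℕ` in the relational language whose `i`-th symbol has arity `ar i`. -/
def Str (ar : ℕ → ℕ) := (i : ℕ) → (Fin (ar i) → ℕ) → Prop

/-- `L_{ω₁,ω}` formulas (variables indexed by `ℕ`, countable conjunctions). -/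
inductive IForm (ar : ℕ → ℕ) : Type
  | atom (i : ℕ) (v : Fin (ar i) → ℕ)
  | eq (x y : ℕ)
  | not (φ : IForm ar)
  | conj (φs : ℕ → IForm ar)
  | all (x : ℕ) (φ : IForm ar)

variable {ar : ℕ → ℕ}

def Sat (A : Str ar) : (ℕ → ℕ) → IForm ar → Prop
  | s, .atom i v => A i fun j => s (v j)
  | s, .eq x y => s x = s y
  | s, .not φ => ¬ Sat A s φ
  | s, .conj φs => ∀ n, Sat A s (φs n)
  | s, .all x φ => ∀ a : ℕ, Sat A (Function.update s x a) φ

def freeVars : IForm ar → Set ℕ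
  | .atom _ v => Set.range v
  | .eq x y => {x, y}
  | .not φ => freeVars φ
  | .conj φs => ⋃ n, freeVars (φs n)
  | .all x φ => freeVars φ \ {x}

/-- A sentence: no free variables. -/
def SentenceF (φ : IForm ar) : Prop := freeVars φ = ∅

/-- Satisfaction of a sentence. -/
def SatS (A : Str ar) (φ : IForm ar) : Prop := Sat A (fun _ => 0) φ

def IForm.disj (φs : ℕ → IForm ar) : IForm ar := .not (.conj fun n => .not (φs n))
def IForm.ex (x : ℕ) (φ : IForm ar) : IForm ar := .not (.all x (.not φ))
def IForm.exs (l : List ℕ) (φ : IForm ar) : IForm ar := l.foldr IForm.ex φ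
def IForm.alls (l : List ℕ) (φ : IForm ar) : IForm ar := l.foldr IForm.all φ
def IForm.and (φ ψ : IForm ar) : IForm ar := .conj fun n => if n = 0 then φ else ψ

/-- Finitary quantifier-free formulas. -/
inductive QFree : IForm ar → Prop
  | atom {i v} : QFree (.atom i v)
  | eq {x y} : QFree (.eq x y)
  | not {φ} : QFree φ → QFree (.not φ)
  | and {φ ψ} : QFree φ → QFree ψ → QFree (φ.and ψ)

mutual
/-- `Σ^in_α` formulas. -/
inductive IsSig : Ordinal.{0} → IForm ar → Prop
  | qf {α : Ordinal} {φ : IForm ar} : QFree φ → IsSig α φ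
  | comp {α : Ordinal} (β : ℕ → Ordinal) (vs : ℕ → List ℕ) (φs : ℕ → IForm ar) :
      (∀ n, β n < α) → (∀ n, IsPi (β n) (φs n)) →
      IsSig α (IForm.disj fun n => IForm.exs (vs n) (φs n))
/-- `Π^in_α` formulas. -/
inductive IsPi : Ordinal.{0} → IForm ar → Prop
  | qf {α : Ordinal} {φ : IForm ar} : QFree φ → IsPi α φ
  | comp {α : Ordinal} (β : ℕ → Ordinal) (vs : ℕ → List ℕ) (φs : ℕ → IForm ar) :
      (∀ n, β n < α) → (∀ n, IsSig (β n) (φs n)) →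
      IsPi α (.conj fun n => IForm.alls (vs n) (φs n))
end

/-- `Σ^in_α`-elementary equivalence (`A ≡_α B`). -/
def SigEquiv (α : Ordinal) (A B : Str ar) : Prop :=
  ∀ φ : IForm ar, IsSig α φ → SentenceF φ → (SatS A φ ↔ SatS B φ)

/-- The assignment sending variable `i` to the `i`-th entry of the tuple `a`. -/
def asn (a : List ℕ) : ℕ → ℕ := fun i => a.getD i 0

/-- Every `Π^in_α` formula (with free variables among the tuple) true of `ā` in `A`
is true of `b̄` in `B`. -/
def PiTypeSub (α : Ordinal) (A : Str ar) (a : List ℕ) (B : Str ar) (b : List ℕ) : Prop :=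
  ∀ φ : IForm ar, IsPi α φ → freeVars φ ⊆ Set.Iio a.length →
    Sat A (asn a) φ → Sat B (asn b) φ

/-! ## Back-and-forth relations -/

/-- `ā` and `b̄` satisfy the same atomic formulas among the first `|ā|` symbols. -/
def atomEquiv (A : Str ar) (a : List ℕ) (B : Str ar) (b : List ℕ) : Prop :=
  a.length = b.length ∧
  (∀ p q, p < a.length → q < a.length →
    (a.getD p 0 = a.getD q 0 ↔ b.getD p 0 = b.getD q 0)) ∧
  (∀ i, i < a.length → ∀ v : Fin (ar i) → ℕ, (∀ j, v j < a.length) →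
    (A i (fun j => a.getD (v j) 0) ↔ B i fun j => b.getD (v j) 0))

/-- The `α`-back-and-forth relations `(A,ā) ≤_α (B,b̄)`. -/
def BFLe (α : Ordinal.{0}) (A : Str ar) (a : List ℕ) (B : Str ar) (b : List ℕ) : Prop :=
  if α = 0 then atomEquiv A a B b
  else ∀ (d : List ℕ) (γ : Ordinal.{0}) (hγ : γ < α),
    ∃ c : List ℕ, c.length = d.length ∧ BFLe γ B (b ++ d) A (a ++ c)
termination_by α
decreasing_by exact hγ

/-- `(A,ā) ≡_α (B,b̄)`. -/
def BFEq (α : Ordinal) (A : Str ar) (a : List ℕ) (B : Str ar) (b : List ℕ) : Prop :=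
  BFLe α A a B b ∧ BFLe α B b A a

/-- `(C,c̄)` belongs to `ext_β(A,ā)`: it is `≤_β` some `(A, ād̄)`. -/
def ExtMem (β : Ordinal) (C : Str ar) (c : List ℕ) (A : Str ar) (a : List ℕ) : Prop :=
  ∃ d : List ℕ, c.length = a.length + d.length ∧ BFLe β C c A (a ++ d)

/-- Re-arrangement `π_ι` of a tuple. -/
def projT (ι : List ℕ) (a : List ℕ) : List ℕ := ι.map fun j => a.getD j 0

/-! ## Isomorphism, diagrams, copies, spectra, Scott rank -/

def IsoStr (A B : Str ar) : Prop :=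
  ∃ e : ℕ ≃ ℕ, ∀ i v, A i v ↔ B i fun j => e (v j)

/-- `D` is (the characteristic function of) the atomic diagram of `B`. -/
def DiagOf (B : Str ar) (D : Cantor) : Prop :=
  ∀ i (v : Fin (ar i) → ℕ),
    (B i v ↔ D (Nat.pair i (Encodable.encode (List.ofFn v))) = true)

/-- `X` computes a copy of `A`. -/
def ComputesCopy (X : Cantor) (A : Str ar) : Prop :=
  ∃ B D, IsoStr A B ∧ DiagOf B D ∧ TRed D X

/-- `ω₁^A = min{ω₁^X : X computes a copy of A}`. -/
def omega1Str (A : Str ar) : Ordinal :=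
  sInf {β : Ordinal | ∃ X, ComputesCopy X A ∧ omega1C X = β}

/-- `ω₁^{A,Y} = min{ω₁^X : X ≥_T Y, X computes a copy of A}`. -/
def omega1StrRel (A : Str ar) (Y : Cantor) : Ordinal :=
  sInf {β : Ordinal | ∃ X, TRed Y X ∧ ComputesCopy X A ∧ omega1C X = β}

/-- The two tuples satisfy the same `L_{ω₁,ω}` formulas in `A`. -/
def AllTypeEq (A : Str ar) (a b : List ℕ) : Prop :=
  ∀ φ : IForm ar, freeVars φ ⊆ Set.Iio a.length → (Sat A (asn a) φ ↔ Sat A (asn b) φ)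

/-- `ρ_A(ā)`: least `α` such that the `Π^in_α` type of `ā` determines its full type. -/
def rhoSR (A : Str ar) (a : List ℕ) : Ordinal :=
  sInf {α : Ordinal | ∀ b : List ℕ, b.length = a.length →
    PiTypeSub α A a A b → AllTypeEq A a b}

/-- Scott rank. -/
def SR (A : Str ar) : Ordinal := ⨆ a : List ℕ, rhoSR A a + 1

/-! ## Counting models -/

def CountablyManyModels (T : IForm ar) : Prop :=
  ∃ S : Set (Str ar), S.Countable ∧ ∀ A, SatS A T → ∃ B ∈ S, IsoStr A B

/-- `T` is scattered: countably many `≡_α`-classes of models for each `α < ω₁`. -/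
def ScatteredT (T : IForm ar) : Prop :=
  ∀ α : Ordinal, α < (Cardinal.aleph 1).ord →
    ∃ S : Set (Str ar), S.Countable ∧ ∀ A, SatS A T → ∃ B ∈ S, SatS B T ∧ SigEquiv α A B

/-- Counterexample to Vaught's conjecture. -/
def CexVC (T : IForm ar) : Prop := ScatteredT T ∧ ¬ CountablyManyModels T

/-- `T` has exactly `ℵ₁` many models up to isomorphism. -/
def Aleph1ManyModels (T : IForm ar) : Prop :=
  Cardinal.mk (Quot fun A B : {M : Str ar // SatS M T} => IsoStr A.1 B.1) = Cardinal.aleph 1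

/-- Minimal counterexample to Vaught's conjecture. -/
def MinimalCex (T : IForm ar) : Prop :=
  Aleph1ManyModels T ∧ ScatteredT T ∧
    ∀ φ : IForm ar, SentenceF φ →
      CountablyManyModels (T.and φ) ∨ CountablyManyModels (T.and φ.not)

/-! ## Computable infinitary formulas -/

/-- `FCodes ar c φ`: `c` is a code of the computable infinitary formula `φ`. -/
inductive FCodes (ar : ℕ → ℕ) : ℕ → IForm ar → Prop
  | atom (i : ℕ) (v : Fin (ar i) → ℕ) :
      FCodes ar (Nat.pair 0 (Nat.pair i (Encodable.encode (List.ofFn fun j => v j)))) (.atom i v)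
  | eq (x y : ℕ) : FCodes ar (Nat.pair 1 (Nat.pair x y)) (.eq x y)
  | not {c φ} : FCodes ar c φ → FCodes ar (Nat.pair 2 c) (.not φ)
  | all {c φ} (x : ℕ) : FCodes ar c φ → FCodes ar (Nat.pair 3 (Nat.pair x c)) (.all x φ)
  | conj (c : Nat.Partrec.Code) (g : ℕ → ℕ) (φs : ℕ → IForm ar) :
      (∀ n, g n ∈ c.eval n) → (∀ n, FCodes ar (g n) (φs n)) →
      FCodes ar (Nat.pair 4 (Encodable.encode c)) (.conj φs)

/-- A computable infinitary (`L^c_{ω₁,ω}`) formula. -/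
def ComputableForm (φ : IForm ar) : Prop := ∃ c, FCodes ar c φ

/-! ## Finite diagrams -/

/-- `m` codes an atomic fact (among the first `|ā|` symbols) true of `ā` in `A`. -/
def FinDiagMem (A : Str ar) (a : List ℕ) (m : ℕ) : Prop :=
  ∃ (i : ℕ) (l : List ℕ), m = Nat.pair i (Encodable.encode l) ∧ i < a.length ∧
    l.length = ar i ∧ (∀ j ∈ l, j < a.length) ∧ A i fun j => a.getD (l.getD (j : ℕ) 0) 0

def tuplesBelow (k : ℕ) : ℕ → List (List ℕ)
  | 0 => [[]]
  | n + 1 => (List.range k).flatMap fun x => (tuplesBelow k n).map fun l => x :: l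

def atomCodes (ar : ℕ → ℕ) (k : ℕ) : List ℕ :=
  (List.range k).flatMap fun i => (tuplesBelow k (ar i)).map fun l => Nat.pair i (Encodable.encode l)

/-- A number coding the atomic diagram `D_A(ā)` of the tuple `ā` in `A`
(over the first `|ā|` symbols of the language). -/
def diagCode (A : Str ar) (a : List ℕ) : ℕ :=
  Nat.pair a.length <| Encodable.encode <|
    (atomCodes ar a.length).filter fun m => decide (FinDiagMem A a m)

/-- A computably enumerable set of naturals. -/
def CEset (S : Set ℕ) : Prop := ∃ c : Nat.Partrec.Code, ∀ n, n ∈ S ↔ (c.eval n).Dom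

/-! ## Hyperarithmetic reducibility (via the Δ¹₁ = HYP characterization) -/

def Pi11In (X : Cantor) (S : Set ℕ) : Prop :=
  ∃ R : Cantor, TRed R X ∧ ∀ n, n ∈ S ↔
    ∀ f : ℕ → ℕ, ∃ k, R (Nat.pair n (Encodable.encode ((List.range k).map f))) = true

/-- `Y` is hyperarithmetic in `X` (i.e. `Δ¹₁(X)`). -/
def HypIn (Y X : Cantor) : Prop :=
  Pi11In X {n | Y n = true} ∧ Pi11In X {n | Y n = false}

/-- `A` has an `X`-hyperarithmetic copy. -/
def HypCopy (X : Cantor) (A : Str ar) : Prop :=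
  ∃ B D, IsoStr A B ∧ DiagOf B D ∧ HypIn D X

/-! ## The theory `T_α` of the `α`-back-and-forth structure, semantically -/

/-- A structure in the extended language `L_α`: a base `L`-structure together with
interpretations of the relations `φ_σ`, where the `β`-bf-type `σ` is represented by a
pair `(C, c̄)` (a model of `T` with a distinguished tuple). -/
structure ExtModel (ar : ℕ → ℕ) where
  base : Str ar
  Phi : Ordinal.{0} → Str ar → List ℕ → List ℕ → Prop

/-- Interpretation of `ψ_σ(b̄) := ⋁_{σ' ∈ bf_α, (σ')_β = σ} φ_{σ'}(b̄)`,
with `σ` represented by `(C, c̄)`. -/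
def PsiH (T : IForm ar) (α : Ordinal.{0}) (M : ExtModel ar) (β : Ordinal.{0})
    (C : Str ar) (c b : List ℕ) : Prop :=
  ∃ (C' : Str ar) (c' : List ℕ), SatS C' T ∧ c'.length = b.length ∧
    BFEq β C' c' C c ∧ M.Phi α C' c' b

/-- `M` is a model of the theory `T_α` axiomatizing the `α`-bf-structure of `T`:
(invariance of the symbols `φ_σ` in the representative of `σ`), (T1) every tuple realizes
exactly one `β`-bf-type, (T2) the recursive definition of `φ_σ`, and (T3) the
implications of `ψ_σ`. -/
def ModelsTAlpha (T : IForm ar) (α : Ordinal.{0}) (M : ExtModel ar) : Prop :=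
  (∀ β ≤ α, ∀ (C : Str ar) (c : List ℕ) (C' : Str ar) (c' : List ℕ) (b : List ℕ),
      SatS C T → SatS C' T → BFEq β C c C' c' → (M.Phi β C c b ↔ M.Phi β C' c' b)) ∧
  (∀ b : List ℕ, ∃ (C : Str ar) (c : List ℕ), SatS C T ∧ c.length = b.length ∧
      M.Phi α C c b) ∧
  (∀ β < α, ∀ (b : List ℕ) (C : Str ar) (c : List ℕ) (C' : Str ar) (c' : List ℕ),
      SatS C T → SatS C' T → PsiH T α M β C c b → PsiH T α M β C' c' b →
      BFEq β C c C' c') ∧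
  (∀ β ≤ α, ∀ (C : Str ar) (c : List ℕ), SatS C T → ∀ b : List ℕ,
      (M.Phi β C c b ↔ b.length = c.length ∧
        (β = 0 → atomEquiv C c M.base b) ∧
        (∀ γ < β, ∀ (D : Str ar) (d : List ℕ), SatS D T → ¬ ExtMem γ D d C c →
          ∀ y : List ℕ, d.length = b.length + y.length → ¬ M.Phi γ D d (b ++ y)))) ∧
  (∀ β < α, ∀ (C : Str ar) (c b : List ℕ), SatS C T → PsiH T α M β C c b →
      M.Phi β C c b ∧ ∀ γ < β, ∀ (D : Str ar) (d : List ℕ), SatS D T →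
        ExtMem γ D d C c →
        ∃ y : List ℕ, d.length = b.length + y.length ∧ M.Phi γ D d (b ++ y))

/-! ## Presentations of the `α`-back-and-forth structure -/

/-- A presentation `𝔹` of the `α`-bf-structure of `T`: an enumeration of the bf-types
of levels `≤ α` (given by levels and representatives), together with an oracle `B`
coding the relations `≤_β`, the projections `(·)_β` and `π_ι`, the extension relations
`ext`, and the atomic diagrams of the `0`-bf-types. -/
structure BFPres (ar : ℕ → ℕ) (T : IForm ar) (α : Ordinal.{0}) where
  B : Cantor
  lvl : ℕ → Ordinal.{0}
  repS : ℕ → Str ar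
  repT : ℕ → List ℕ
  lvl_le : ∀ n, lvl n ≤ α
  rep_models : ∀ n, SatS (repS n) T
  surj : ∀ β ≤ α, ∀ (A : Str ar) (a : List ℕ), SatS A T →
    ∃ n, lvl n = β ∧ (repT n).length = a.length ∧ BFEq β (repS n) (repT n) A a
  le_code : ∀ m n, (B (Nat.pair 0 (Nat.pair m n)) = true ↔
    lvl m = lvl n ∧ BFLe (lvl m) (repS m) (repT m) (repS n) (repT n))
  proj_code : ∀ m n, (B (Nat.pair 1 (Nat.pair m n)) = true ↔
    lvl m ≤ lvl n ∧ BFEq (lvl m) (repS m) (repT m) (repS n) (repT n))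
  ext_code : ∀ m n, (B (Nat.pair 2 (Nat.pair m n)) = true ↔
    lvl m < lvl n ∧ ExtMem (lvl m) (repS m) (repT m) (repS n) (repT n))
  pi_code : ∀ m n (ι : List ℕ),
    (B (Nat.pair 3 (Nat.pair m (Nat.pair n (Encodable.encode ι)))) = true ↔
      lvl m = lvl n ∧ (∀ j ∈ ι, j < (repT n).length) ∧
      BFEq (lvl m) (repS m) (repT m) (repS n) (projT ι (repT n)))
  diag_code : ∀ m k, (B (Nat.pair 4 (Nat.pair m k)) = true ↔
    lvl m = 0 ∧ FinDiagMem (repS m) (repT m) k)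

end

section VaughtAux

open Cardinal Set

variable {ar : ℕ → ℕ}

local notation "ω₁" => Cardinal.ord (Cardinal.aleph 1)

lemma sat_atom {A : Str ar} {s : ℕ → ℕ} {i v} :
    Sat A s (.atom i v) ↔ A i fun j => s (v j) := Iff.rfl

lemma sat_eq {A : Str ar} {s : ℕ → ℕ} {x y} : Sat A s (.eq x y) ↔ s x = s y := Iff.rfl

lemma sat_not {A : Str ar} {s : ℕ → ℕ} {φ} : Sat A s (.not φ) ↔ ¬ Sat A s φ := Iff.rfl

lemma sat_conj {A : Str ar} {s : ℕ → ℕ} {φs : ℕ → IForm ar} :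
    Sat A s (.conj φs) ↔ ∀ n, Sat A s (φs n) := Iff.rfl

lemma sat_all {A : Str ar} {s : ℕ → ℕ} {x φ} :
    Sat A s (.all x φ) ↔ ∀ a : ℕ, Sat A (Function.update s x a) φ := Iff.rfl

lemma fv_not {φ : IForm ar} : freeVars (.not φ) = freeVars φ := rfl

lemma fv_conj {φs : ℕ → IForm ar} : freeVars (.conj φs) = ⋃ n, freeVars (φs n) := rfl

lemma fv_all {x : ℕ} {φ : IForm ar} : freeVars (.all x φ) = freeVars φ \ {x} := rfl

lemma sentenceF_not {φ : IForm ar} (h : SentenceF φ) : SentenceF (.not φ) := h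

lemma satS_and {A : Str ar} {T φ : IForm ar} :
    SatS A (T.and φ) ↔ SatS A T ∧ SatS A φ := by
  constructor
  · intro h
    exact ⟨by simpa [SatS] using h 0, by simpa [SatS] using h 1⟩
  · rintro ⟨h1, h2⟩ n
    by_cases hn : n = 0 <;> simp [IForm.and, hn, SatS] at * <;> assumption

lemma IsPi.mono {α α' : Ordinal} {φ : IForm ar} (h : IsPi α φ) (hle : α ≤ α') : IsPi α' φ := by
  cases h with
  | qf h => exact .qf h
  | comp β vs φs hβ hφ => exact .comp β vs φs (fun n => lt_of_lt_of_le (hβ n) hle) hφ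

lemma IsSig.mono {α α' : Ordinal} {φ : IForm ar} (h : IsSig α φ) (hle : α ≤ α') :
    IsSig α' φ := by
  cases h with
  | qf h => exact .qf h
  | comp β vs φs hβ hφ => exact .comp β vs φs (fun n => lt_of_lt_of_le (hβ n) hle) hφ

lemma SigEquiv.refl' {α : Ordinal} (A : Str ar) : SigEquiv α A A := fun _ _ _ => Iff.rfl

lemma SigEquiv.symm' {α : Ordinal} {A B : Str ar} (h : SigEquiv α A B) : SigEquiv α B A :=
  fun φ h1 h2 => (h φ h1 h2).symm

lemma SigEquiv.trans' {α : Ordinal} {A B C : Str ar} (h : SigEquiv α A B)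
    (h' : SigEquiv α B C) : SigEquiv α A C :=
  fun φ h1 h2 => (h φ h1 h2).trans (h' φ h1 h2)

lemma IsoStr.symm' {A B : Str ar} (h : IsoStr A B) : IsoStr B A := by
  obtain ⟨e, he⟩ := h
  refine ⟨e.symm, fun i v => ?_⟩
  have := he i fun j => e.symm (v j)
  simpa using this.symm

lemma IsoStr.trans' {A B C : Str ar} (h : IsoStr A B) (h' : IsoStr B C) : IsoStr A C := by
  obtain ⟨e, he⟩ := h
  obtain ⟨f, hf⟩ := h'
  exact ⟨e.trans f, fun i v => (he i v).trans (hf i fun j => e (v j))⟩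

lemma sat_agree (A : Str ar) : ∀ (φ : IForm ar) (s t : ℕ → ℕ),
    (∀ x ∈ freeVars φ, s x = t x) → (Sat A s φ ↔ Sat A t φ) := by
  intro φ
  induction φ with
  | atom i v =>
    intro s t h
    have : (fun j => s (v j)) = fun j => t (v j) :=
      funext fun j => h (v j) ⟨j, rfl⟩
    simp only [sat_atom, this]
  | eq x y =>
    intro s t h
    rw [sat_eq, sat_eq, h x (by left; rfl), h y (by right; rfl)]
  | not φ ih =>
    intro s t h
    rw [sat_not, sat_not, ih s t h]
  | conj φs ih =>
    intro s t h
    rw [sat_conj, sat_conj]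
    exact forall_congr' fun n => ih n s t fun x hx => h x (Set.mem_iUnion.2 ⟨n, hx⟩)
  | all x φ ih =>
    intro s t h
    rw [sat_all, sat_all]
    refine forall_congr' fun a => ih _ _ fun y hy => ?_
    by_cases hxy : y = x
    · subst hxy; simp [Function.update]
    · rw [Function.update_of_ne hxy, Function.update_of_ne hxy]
      exact h y ⟨hy, hxy⟩

lemma sat_iso {A B : Str ar} (e : ℕ ≃ ℕ) (he : ∀ i v, A i v ↔ B i fun j => e (v j)) :
    ∀ (φ : IForm ar) (s : ℕ → ℕ), Sat A s φ ↔ Sat B (fun x => e (s x)) φ := by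
  intro φ
  induction φ with
  | atom i v => intro s; exact he i fun j => s (v j)
  | eq x y => intro s; rw [sat_eq, sat_eq]; exact (Equiv.apply_eq_iff_eq e).symm
  | not φ ih => intro s; rw [sat_not, sat_not, ih s]
  | conj φs ih => intro s; rw [sat_conj, sat_conj]; exact forall_congr' fun n => ih n s
  | all x φ ih =>
    intro s
    rw [sat_all, sat_all]
    constructor
    · intro h a
      have := (ih (Function.update s x (e.symm a))).mp (h (e.symm a))
      have heq : (fun y => e (Function.update s x (e.symm a) y))
          = Function.update (fun y => e (s y)) x a := by
        funext y
        by_cases hxy : y = x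
        · subst hxy; simp
        · simp [Function.update_of_ne hxy]
      rwa [heq] at this
    · intro h a
      refine (ih (Function.update s x a)).mpr ?_
      have := h (e a)
      have heq : (fun y => e (Function.update s x a y))
          = Function.update (fun y => e (s y)) x (e a) := by
        funext y
        by_cases hxy : y = x
        · subst hxy; simp
        · simp [Function.update_of_ne hxy]
      rwa [heq]

lemma satS_iso {A B : Str ar} (h : IsoStr A B) {φ : IForm ar} (hφ : SentenceF φ) :
    SatS A φ ↔ SatS B φ := by
  obtain ⟨e, he⟩ := h
  unfold SatS
  rw [sat_iso e he φ]
  exact sat_agree B φ _ _ fun x hx => by rw [hφ] at hx; exact absurd hx (Set.notMem_empty x)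

lemma omega1_isLimit : Order.IsSuccLimit (Cardinal.ord (Cardinal.aleph 1)) :=
  Cardinal.isSuccLimit_ord (Cardinal.aleph0_le_aleph 1)

lemma omega1_pos : (0 : Ordinal) < ω₁ := omega1_isLimit.pos

lemma succ_lt_omega1 {a : Ordinal} (h : a < ω₁) : a + 1 < ω₁ := by
  rw [Ordinal.add_one_eq_succ]; exact omega1_isLimit.succ_lt h

lemma iSup_nat_lt_omega1 {f : ℕ → Ordinal.{0}} (h : ∀ n, f n < ω₁) : (⨆ n, f n) < ω₁ := by
  apply Cardinal.iSup_lt_ord_of_isRegular Cardinal.isRegular_aleph_one _ h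
  rw [Cardinal.mk_nat]; exact Cardinal.aleph0_lt_aleph_one

lemma countable_rank : ∀ α : Ordinal, ∀ φ : IForm ar,
    (IsPi α φ → ∃ α' < ω₁, IsPi α' φ) ∧ (IsSig α φ → ∃ α' < ω₁, IsSig α' φ) := by
  intro α
  induction α using Ordinal.induction with
  | h α IH =>
    intro φ
    constructor
    · intro h
      cases h with
      | qf h => exact ⟨0, omega1_pos, .qf h⟩
      | comp β vs φs hβ hφ =>
        choose γ hγ hpi using fun n => (IH (β n) (hβ n) (φs n)).2 (hφ n)
        refine ⟨⨆ n, γ n + 1, iSup_nat_lt_omega1 fun n => succ_lt_omega1 (hγ n), ?_⟩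
        exact .comp γ vs φs
          (fun n => lt_of_lt_of_le
            (by rw [Ordinal.add_one_eq_succ]; exact Order.lt_succ (γ n) :
              γ n < γ n + 1)
            (le_ciSup (Ordinal.bddAbove_range _) n)) hpi
    · intro h
      cases h with
      | qf h => exact ⟨0, omega1_pos, .qf h⟩
      | comp β vs φs hβ hφ =>
        choose γ hγ hpi using fun n => (IH (β n) (hβ n) (φs n)).1 (hφ n)
        refine ⟨⨆ n, γ n + 1, iSup_nat_lt_omega1 fun n => succ_lt_omega1 (hγ n), ?_⟩
        exact .comp γ vs φs
          (fun n => lt_of_lt_of_le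
            (by rw [Ordinal.add_one_eq_succ]; exact Order.lt_succ (γ n) :
              γ n < γ n + 1)
            (le_ciSup (Ordinal.bddAbove_range _) n)) hpi

lemma sat_exs_alls (A : Str ar) : ∀ (l : List ℕ) (φ ψ : IForm ar),
    (∀ s, Sat A s φ ↔ ¬ Sat A s ψ) →
    ∀ s, Sat A s (IForm.exs l φ) ↔ ¬ Sat A s (IForm.alls l ψ) := by
  intro l
  induction l with
  | nil => intro φ ψ h s; exact h s
  | cons x l ih =>
    intro φ ψ h s
    show Sat A s (.not (.all x (.not (IForm.exs l φ)))) ↔ ¬ Sat A s (.all x (IForm.alls l ψ))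
    rw [sat_not, sat_all, sat_all]
    constructor
    · intro hh hc
      exact hh fun a => by rw [sat_not, ih φ ψ h]; exact not_not_intro (hc a)
    · intro hh hc
      refine hh fun a => ?_
      have := hc a
      rw [sat_not, ih φ ψ h] at this
      exact not_not.mp this

lemma fv_exs : ∀ (l : List ℕ) (φ : IForm ar),
    freeVars (IForm.exs l φ) = freeVars φ \ {x | x ∈ l} := by
  intro l
  induction l with
  | nil => intro φ; simp [IForm.exs]
  | cons x l ih =>
    intro φ
    show freeVars (IForm.exs l φ) \ {x} = _
    rw [ih φ]
    ext y
    simp only [Set.mem_diff, Set.mem_setOf_eq, List.mem_cons, Set.mem_singleton_iff]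
    tauto

lemma fv_alls : ∀ (l : List ℕ) (φ : IForm ar),
    freeVars (IForm.alls l φ) = freeVars φ \ {x | x ∈ l} := by
  intro l
  induction l with
  | nil => intro φ; simp [IForm.alls]
  | cons x l ih =>
    intro φ
    show freeVars (IForm.alls l φ) \ {x} = _
    rw [ih φ]
    ext y
    simp only [Set.mem_diff, Set.mem_setOf_eq, List.mem_cons, Set.mem_singleton_iff]
    tauto

lemma neg_rank : ∀ α : Ordinal, ∀ φ : IForm ar,
    (IsPi α φ → ∃ ψ, IsSig α ψ ∧ freeVars ψ ⊆ freeVars φ ∧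
      ∀ (A : Str ar) (s : ℕ → ℕ), Sat A s ψ ↔ ¬ Sat A s φ) ∧
    (IsSig α φ → ∃ ψ, IsPi α ψ ∧ freeVars ψ ⊆ freeVars φ ∧
      ∀ (A : Str ar) (s : ℕ → ℕ), Sat A s ψ ↔ ¬ Sat A s φ) := by
  intro α
  induction α using Ordinal.induction with
  | h α IH =>
    intro φ
    constructor
    · intro h
      cases h with
      | qf h => exact ⟨.not φ, .qf (.not h), subset_of_eq rfl, fun A s => Iff.rfl⟩
      | comp β vs φs hβ hφ =>
        choose σ hσ hfv hsat using fun n => (IH (β n) (hβ n) (φs n)).2 (hφ n)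
        refine ⟨IForm.disj fun n => IForm.exs (vs n) (σ n),
          .comp β vs σ hβ hσ, ?_, ?_⟩
        · show ⋃ n, freeVars (IForm.exs (vs n) (σ n)) ⊆ ⋃ n, freeVars (IForm.alls (vs n) (φs n))
          refine Set.iUnion_mono fun n => ?_
          rw [fv_exs, fv_alls]
          exact Set.diff_subset_diff_left (hfv n)
        · intro A s
          show (¬ ∀ n, ¬ Sat A s (IForm.exs (vs n) (σ n))) ↔
            ¬ ∀ n, Sat A s (IForm.alls (vs n) (φs n))
          apply not_congr
          refine forall_congr' fun n => ?_
          rw [sat_exs_alls A (vs n) (σ n) (φs n) (hsat n A) s, not_not]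
    · intro h
      cases h with
      | qf h => exact ⟨.not φ, .qf (.not h), subset_of_eq rfl, fun A s => Iff.rfl⟩
      | comp β vs φs hβ hφ =>
        choose σ hσ hfv hsat using fun n => (IH (β n) (hβ n) (φs n)).1 (hφ n)
        refine ⟨.conj fun n => IForm.alls (vs n) (σ n), .comp β vs σ hβ hσ, ?_, ?_⟩
        · show ⋃ n, freeVars (IForm.alls (vs n) (σ n)) ⊆
            ⋃ n, freeVars (IForm.exs (vs n) (φs n))
          refine Set.iUnion_mono fun n => ?_
          rw [fv_exs, fv_alls]
          exact Set.diff_subset_diff_left (hfv n)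
        · intro A s
          show (∀ n, Sat A s (IForm.alls (vs n) (σ n))) ↔
            ¬ ¬ ∀ n, ¬ Sat A s (IForm.exs (vs n) (φs n))
          rw [not_not]
          refine forall_congr' fun n => ?_
          have key : ∀ t, Sat A t (φs n) ↔ ¬ Sat A t (σ n) := by
            intro t; rw [hsat n A t]; exact (not_not).symm
          rw [sat_exs_alls A (vs n) (φs n) (σ n) key s]
          exact not_not.symm

lemma iSup_countable_lt_omega1 {ι : Type} [Countable ι] {f : ι → Ordinal.{0}}
    (h : ∀ i, f i < ω₁) : (⨆ i, f i) < ω₁ := by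
  apply Cardinal.iSup_lt_ord_of_isRegular Cardinal.isRegular_aleph_one _ h
  exact lt_of_le_of_lt Cardinal.mk_le_aleph0 Cardinal.aleph0_lt_aleph_one

lemma sig_wrap {α : Ordinal} {χ : IForm ar} (h : IsPi α χ) :
    ∃ ψ : IForm ar, IsSig (α + 1) ψ ∧ freeVars ψ = freeVars χ ∧
      ∀ (A : Str ar) (s : ℕ → ℕ), Sat A s ψ ↔ Sat A s χ := by
  refine ⟨IForm.disj fun _ => IForm.exs [] χ, ?_, ?_, ?_⟩
  · exact IsSig.comp (fun _ => α) (fun _ => []) (fun _ => χ)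
      (fun _ => by rw [Ordinal.add_one_eq_succ]; exact Order.lt_succ α) (fun _ => h)
  · show ⋃ _n : ℕ, freeVars χ = freeVars χ
    exact Set.iUnion_const _
  · intro A s
    show (¬ ∀ _n : ℕ, ¬ Sat A s χ) ↔ Sat A s χ
    simp

lemma normal_form : ∀ φ : IForm ar,
    (∃ (α : Ordinal) (ψ : IForm ar), IsPi α ψ ∧ freeVars ψ ⊆ freeVars φ ∧
      ∀ (A : Str ar) (s : ℕ → ℕ), Sat A s ψ ↔ Sat A s φ) ∧
    (∃ (α : Ordinal) (ψ : IForm ar), IsSig α ψ ∧ freeVars ψ ⊆ freeVars φ ∧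
      ∀ (A : Str ar) (s : ℕ → ℕ), Sat A s ψ ↔ Sat A s φ) := by
  intro φ
  induction φ with
  | atom i v =>
    exact ⟨⟨0, .atom i v, .qf .atom, subset_rfl, fun A s => Iff.rfl⟩,
           ⟨0, .atom i v, .qf .atom, subset_rfl, fun A s => Iff.rfl⟩⟩
  | eq x y =>
    exact ⟨⟨0, .eq x y, .qf .eq, subset_rfl, fun A s => Iff.rfl⟩,
           ⟨0, .eq x y, .qf .eq, subset_rfl, fun A s => Iff.rfl⟩⟩
  | not φ ih =>
    obtain ⟨⟨απ, ψπ, hπ, hfvπ, hsπ⟩, ⟨ασ, ψσ, hσ, hfvσ, hsσ⟩⟩ := ih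
    constructor
    · obtain ⟨χ, hχ, hfvχ, hsχ⟩ := (neg_rank ασ ψσ).2 hσ
      exact ⟨ασ, χ, hχ, hfvχ.trans hfvσ,
        fun A s => (hsχ A s).trans (not_congr (hsσ A s))⟩
    · obtain ⟨χ, hχ, hfvχ, hsχ⟩ := (neg_rank απ ψπ).1 hπ
      exact ⟨απ, χ, hχ, hfvχ.trans hfvπ,
        fun A s => (hsχ A s).trans (not_congr (hsπ A s))⟩
  | conj φs ih =>
    choose ασ ψσ hσ hfvσ hsσ using fun n => (ih n).2
    have hpi : IsPi (⨆ n, ασ n + 1) (.conj fun n => IForm.alls [] (ψσ n)) :=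
      IsPi.comp ασ (fun _ => []) ψσ
        (fun n => lt_of_lt_of_le
          (by rw [Ordinal.add_one_eq_succ]; exact Order.lt_succ _ : ασ n < ασ n + 1)
          (le_ciSup (Ordinal.bddAbove_range _) n)) hσ
    have hfv : freeVars (.conj fun n => IForm.alls [] (ψσ n) : IForm ar)
        ⊆ freeVars (.conj φs : IForm ar) := by
      show (⋃ n, freeVars (ψσ n)) ⊆ ⋃ n, freeVars (φs n)
      exact Set.iUnion_mono hfvσ
    have hsat : ∀ (A : Str ar) (s : ℕ → ℕ),
        Sat A s (.conj fun n => IForm.alls [] (ψσ n)) ↔ Sat A s (.conj φs) := by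
      intro A s
      show (∀ n, Sat A s (ψσ n)) ↔ ∀ n, Sat A s (φs n)
      exact forall_congr' fun n => hsσ n A s
    refine ⟨⟨_, _, hpi, hfv, hsat⟩, ?_⟩
    obtain ⟨ψ, hψ, hfvψ, hsψ⟩ := sig_wrap hpi
    exact ⟨_, ψ, hψ, (subset_of_eq hfvψ).trans hfv,
      fun A s => (hsψ A s).trans (hsat A s)⟩
  | all x φ ih =>
    obtain ⟨_, ⟨ασ, ψσ, hσ, hfvσ, hsσ⟩⟩ := ih
    have hpi : IsPi (ασ + 1) (.conj fun _ : ℕ => IForm.alls [x] ψσ) :=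
      IsPi.comp (fun _ => ασ) (fun _ => [x]) (fun _ => ψσ)
        (fun _ => by rw [Ordinal.add_one_eq_succ]; exact Order.lt_succ _) (fun _ => hσ)
    have hfv : freeVars (.conj fun _ : ℕ => IForm.alls [x] ψσ : IForm ar)
        ⊆ freeVars (.all x φ : IForm ar) := by
      show (⋃ _n : ℕ, (freeVars ψσ \ {x})) ⊆ freeVars φ \ {x}
      rw [Set.iUnion_const]
      exact Set.diff_subset_diff_left hfvσ
    have hsat : ∀ (A : Str ar) (s : ℕ → ℕ),
        Sat A s (.conj fun _ : ℕ => IForm.alls [x] ψσ) ↔ Sat A s (.all x φ) := by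
      intro A s
      show (∀ _n : ℕ, ∀ a : ℕ, Sat A (Function.update s x a) ψσ) ↔
        ∀ a : ℕ, Sat A (Function.update s x a) φ
      rw [forall_const]
      exact forall_congr' fun a => hsσ A _
    refine ⟨⟨_, _, hpi, hfv, hsat⟩, ?_⟩
    obtain ⟨ψ, hψ, hfvψ, hsψ⟩ := sig_wrap hpi
    exact ⟨_, ψ, hψ, (subset_of_eq hfvψ).trans hfv,
      fun A s => (hsψ A s).trans (hsat A s)⟩

lemma piTypeSub_mono {α α' : Ordinal} {A : Str ar} {a : List ℕ} {B : Str ar} {b : List ℕ}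
    (h : PiTypeSub α' A a B b) (hle : α ≤ α') : PiTypeSub α A a B b :=
  fun φ hφ hfv hs => h φ (hφ.mono hle) hfv hs

lemma rhoSR_witness (A : Str ar) (a : List ℕ) : ∃ α : Ordinal, α < ω₁ ∧
    ∀ b : List ℕ, b.length = a.length → PiTypeSub α A a A b → AllTypeEq A a b := by
  classical
  have hglt : ∀ b : List ℕ, sInf {α : Ordinal | ¬ PiTypeSub α A a A b} < ω₁ := by
    intro b
    by_cases hne : {α : Ordinal | ¬ PiTypeSub α A a A b}.Nonempty
    · obtain ⟨α₀, hα₀⟩ := hne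
      simp only [Set.mem_setOf_eq, PiTypeSub] at hα₀
      push_neg at hα₀
      obtain ⟨φ, hpi, hfv, hsat, hnsat⟩ := hα₀
      obtain ⟨α', hα', hpi'⟩ := (countable_rank α₀ φ).1 hpi
      refine lt_of_le_of_lt (csInf_le (OrderBot.bddBelow _) ?_) hα'
      intro hc
      exact hnsat (hc φ hpi' hfv hsat)
    · rw [Set.not_nonempty_iff_eq_empty] at hne
      rw [hne, Ordinal.sInf_empty]
      exact omega1_pos
  have hstar : (⨆ b : List ℕ, sInf {α : Ordinal | ¬ PiTypeSub α A a A b}) < ω₁ :=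
    iSup_countable_lt_omega1 hglt
  refine ⟨_, hstar, ?_⟩
  intro b _hlen hsub
  have hall : ∀ α : Ordinal, PiTypeSub α A a A b := by
    intro α
    by_contra hc
    have hne : {α : Ordinal | ¬ PiTypeSub α A a A b}.Nonempty := ⟨α, hc⟩
    have hmem := csInf_mem hne
    have hle : sInf {α : Ordinal | ¬ PiTypeSub α A a A b}
        ≤ ⨆ b : List ℕ, sInf {α : Ordinal | ¬ PiTypeSub α A a A b} :=
      le_ciSup (Ordinal.bddAbove_range _) b
    exact hmem (piTypeSub_mono hsub hle)
  intro φ hfv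
  obtain ⟨⟨α₁, ψ₁, hψ₁pi, hψ₁fv, hψ₁sat⟩, -⟩ := normal_form φ
  obtain ⟨⟨α₂, ψ₂, hψ₂pi, hψ₂fv, hψ₂sat⟩, -⟩ := normal_form (.not φ)
  constructor
  · intro h
    exact (hψ₁sat A _).mp
      (hall α₁ ψ₁ hψ₁pi (hψ₁fv.trans hfv) ((hψ₁sat A _).mpr h))
  · intro h
    by_contra hc
    exact (hψ₂sat A _).mp
      (hall α₂ ψ₂ hψ₂pi (hψ₂fv.trans hfv) ((hψ₂sat A _).mpr hc)) h


lemma rhoSR_lt_omega1 (A : Str ar) (a : List ℕ) : rhoSR A a < ω₁ := by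
  obtain ⟨α, hα, hmem⟩ := rhoSR_witness A a
  exact lt_of_le_of_lt (csInf_le (OrderBot.bddBelow _) hmem) hα

lemma SR_lt_omega1 (A : Str ar) : SR A < ω₁ := by
  unfold SR
  exact iSup_countable_lt_omega1 fun a => succ_lt_omega1 (rhoSR_lt_omega1 A a)

lemma iso_symm_rel {A B : Str ar} (e : ℕ ≃ ℕ)
    (he : ∀ i v, A i v ↔ B i fun j => e (v j)) :
    ∀ i v, B i v ↔ A i fun j => e.symm (v j) := by
  intro i v
  have := he i fun j => e.symm (v j)
  simpa using this.symm

lemma asn_map (e : ℕ ≃ ℕ) (a : List ℕ) {x : ℕ} (hx : x < a.length) :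
    asn (a.map e) x = e (asn a x) := by
  unfold asn
  rw [List.getD_eq_getElem _ _ (by simpa using hx), List.getD_eq_getElem _ _ hx,
    List.getElem_map]

lemma sat_asn_map {A B : Str ar} (e : ℕ ≃ ℕ)
    (he : ∀ i v, A i v ↔ B i fun j => e (v j)) (φ : IForm ar) (a : List ℕ)
    (hfv : freeVars φ ⊆ Set.Iio a.length) :
    Sat B (asn (a.map e)) φ ↔ Sat A (asn a) φ := by
  rw [sat_iso e he φ (asn a)]
  exact sat_agree B φ _ _ fun x hx => asn_map e a (hfv hx)

lemma piTypeSub_map {A B : Str ar} (e : ℕ ≃ ℕ)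
    (he : ∀ i v, A i v ↔ B i fun j => e (v j)) {α : Ordinal} {a b : List ℕ}
    (hlen : b.length = a.length) (h : PiTypeSub α A a A b) :
    PiTypeSub α B (a.map e) B (b.map e) := by
  intro φ hφ hfv hsat
  rw [List.length_map] at hfv
  have h1 : Sat A (asn a) φ := (sat_asn_map e he φ a hfv).mp hsat
  have h2 : Sat A (asn b) φ := h φ hφ hfv h1
  exact (sat_asn_map e he φ b (hlen ▸ hfv)).mpr h2

lemma allTypeEq_map {A B : Str ar} (e : ℕ ≃ ℕ)
    (he : ∀ i v, A i v ↔ B i fun j => e (v j)) {a b : List ℕ}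
    (hlen : b.length = a.length) (h : AllTypeEq A a b) :
    AllTypeEq B (a.map e) (b.map e) := by
  intro φ hfv
  rw [List.length_map] at hfv
  rw [sat_asn_map e he φ a hfv, sat_asn_map e he φ b (hlen ▸ hfv)]
  exact h φ hfv

lemma map_symm_map (e : ℕ ≃ ℕ) (l : List ℕ) : (l.map e.symm).map e = l := by
  rw [List.map_map]
  simp

lemma map_map_symm (e : ℕ ≃ ℕ) (l : List ℕ) : (l.map e).map e.symm = l := by
  rw [List.map_map]
  simp

lemma rhoSR_map_le {A B : Str ar} (e : ℕ ≃ ℕ)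
    (he : ∀ i v, A i v ↔ B i fun j => e (v j)) (a : List ℕ) :
    rhoSR B (a.map e) ≤ rhoSR A a := by
  have he' := iso_symm_rel e he
  unfold rhoSR
  apply csInf_le_csInf (OrderBot.bddBelow _)
  · obtain ⟨α, _, hmem⟩ := rhoSR_witness A a
    exact ⟨α, hmem⟩
  · intro α hα
    intro b' hlen hsub
    have hlen2 : (b'.map e.symm).length = a.length := by simpa using hlen
    have hsubA : PiTypeSub α A a A (b'.map e.symm) := by
      have := piTypeSub_map e.symm he' (a := a.map e) (b := b') hlen hsub
      rwa [map_map_symm] at this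
    have hAll : AllTypeEq A a (b'.map e.symm) := hα _ hlen2 hsubA
    have := allTypeEq_map e he hlen2 hAll
    rwa [map_symm_map] at this

lemma rhoSR_map {A B : Str ar} (e : ℕ ≃ ℕ)
    (he : ∀ i v, A i v ↔ B i fun j => e (v j)) (a : List ℕ) :
    rhoSR B (a.map e) = rhoSR A a := by
  refine le_antisymm (rhoSR_map_le e he a) ?_
  have := rhoSR_map_le e.symm (iso_symm_rel e he) (a.map e)
  rwa [map_map_symm] at this

lemma SR_iso {A B : Str ar} (h : IsoStr A B) : SR A = SR B := by
  obtain ⟨e, he⟩ := h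
  have key : ∀ a : List ℕ, rhoSR B (a.map e) = rhoSR A a := rhoSR_map e he
  unfold SR
  apply le_antisymm
  · refine ciSup_le fun a => ?_
    rw [← key a]
    exact le_ciSup (Ordinal.bddAbove_range fun b => rhoSR B b + 1) (a.map e)
  · refine ciSup_le fun b => ?_
    have hb : rhoSR B b = rhoSR A (b.map e.symm) := by
      have := key (b.map e.symm)
      rwa [map_symm_map] at this
    rw [hb]
    exact le_ciSup (Ordinal.bddAbove_range fun a => rhoSR A a + 1) (b.map e.symm)

lemma not_countably_of_aleph1 {T : IForm ar} (h1 : Aleph1ManyModels T) :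
    ¬ CountablyManyModels T := by
  rintro ⟨S, hSc, hcov⟩
  classical
  set S' : Set (Str ar) := {B | B ∈ S ∧ ∃ A : Str ar, SatS A T ∧ IsoStr A B} with hS'
  have hchoice : ∀ b : S', ∃ A : Str ar, SatS A T ∧ IsoStr A b.1 := fun b => b.2.2
  choose rep hrepT hrepI using hchoice
  have hsurj : Function.Surjective
      (fun b : S' => Quot.mk (fun A B : {M : Str ar // SatS M T} => IsoStr A.1 B.1)
        ⟨rep b, hrepT b⟩) := by
    intro q
    induction q using Quot.ind with
    | _ M =>
      obtain ⟨B, hBS, hBi⟩ := hcov M.1 M.2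
      have hmem : B ∈ S' := ⟨hBS, M.1, M.2, hBi⟩
      exact ⟨⟨B, hmem⟩, Quot.sound ((hrepI ⟨B, hmem⟩).trans' hBi.symm')⟩
  have hle : Cardinal.aleph 1 ≤ Cardinal.mk S' := by
    rw [← h1]
    exact Cardinal.mk_le_of_surjective hsurj
  have hct : Cardinal.mk S' ≤ Cardinal.aleph0 := by
    have : S'.Countable := hSc.mono fun x hx => hx.1
    exact this.le_aleph0
  exact absurd (hle.trans hct) (not_le.mpr Cardinal.aleph0_lt_aleph_one)

lemma key_level {T : IForm ar} (hT : MinimalCex T) {β : Ordinal} (hβ : β < ω₁) :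
    ∃ δ : Ordinal, δ < ω₁ ∧ ∀ M N : Str ar, SatS M T → SatS N T →
      δ ≤ SR M → δ ≤ SR N → SigEquiv β M N := by
  classical
  obtain ⟨S, hSc, hScov⟩ := hT.2.1 β hβ
  set Small : Str ar → Prop := fun M => ∃ W : Set (Str ar), W.Countable ∧
    ∀ N, SatS N T → SigEquiv β M N → ∃ w ∈ W, IsoStr N w with hSmall
  have minlem : ∀ s₀ s : Str ar, SatS s₀ T → SatS s T → ¬ SigEquiv β s₀ s →
      ¬ Small s₀ → Small s := by
    intro s₀ s h0 hs hneq hbig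
    unfold SigEquiv at hneq
    push_neg at hneq
    obtain ⟨φ, hsig, hsent, hne⟩ := hneq
    rcases hne with ⟨h1, h2⟩ | ⟨h1, h1'⟩
    · rcases hT.2.2 φ hsent with hc | hc
      · exfalso
        obtain ⟨W, hWc, hWcov⟩ := hc
        exact hbig ⟨W, hWc, fun N hN heq =>
          hWcov N (satS_and.mpr ⟨hN, (heq φ hsig hsent).mp h1⟩)⟩
      · obtain ⟨W, hWc, hWcov⟩ := hc
        exact ⟨W, hWc, fun N hN heq => hWcov N (satS_and.mpr
          ⟨hN, fun hc2 => h2 ((heq φ hsig hsent).mpr hc2)⟩)⟩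
    · rcases hT.2.2 φ hsent with hc | hc
      · obtain ⟨W, hWc, hWcov⟩ := hc
        exact ⟨W, hWc, fun N hN heq =>
          hWcov N (satS_and.mpr ⟨hN, (heq φ hsig hsent).mp h1'⟩)⟩
      · exfalso
        obtain ⟨W, hWc, hWcov⟩ := hc
        exact hbig ⟨W, hWc, fun N hN heq => hWcov N (satS_and.mpr
          ⟨hN, fun hc2 => h1 ((heq φ hsig hsent).mpr hc2)⟩)⟩
  by_cases hbig : ∃ s₀, SatS s₀ T ∧ ¬ Small s₀
  · obtain ⟨s₀, hs₀T, hs₀big⟩ := hbig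
    set S' : Set (Str ar) := {s ∈ S | SatS s T ∧ ¬ SigEquiv β s₀ s} with hS'
    have hS'c : S'.Countable := hSc.mono fun x hx => hx.1
    have hsm : ∀ s : S', Small s.1 := fun s => minlem s₀ s.1 hs₀T s.2.2.1 s.2.2.2 hs₀big
    choose Wf hWfc hWfcov using hsm
    haveI : Countable S' := hS'c.to_subtype
    set W : Set (Str ar) := ⋃ s : S', Wf s with hW
    have hWc : W.Countable := Set.countable_iUnion hWfc
    haveI : Countable W := hWc.to_subtype
    set δ : Ordinal := ⨆ w : W, SR w.1 + 1 with hδ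
    have hδlt : δ < ω₁ :=
      iSup_countable_lt_omega1 fun w => succ_lt_omega1 (SR_lt_omega1 w.1)
    have keyN : ∀ N : Str ar, SatS N T → δ ≤ SR N → SigEquiv β s₀ N := by
      intro N hN hSR
      by_contra hne
      obtain ⟨s, hsS, hsT, hseq⟩ := hScov N hN
      have hns : ¬ SigEquiv β s₀ s := fun h => hne (h.trans' hseq.symm')
      have hsmem : s ∈ S' := ⟨hsS, hsT, hns⟩
      obtain ⟨w, hwW, hiso⟩ := hWfcov ⟨s, hsmem⟩ N hN hseq.symm'
      have hwW' : w ∈ W := Set.mem_iUnion.2 ⟨⟨s, hsmem⟩, hwW⟩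
      have hle : SR w + 1 ≤ δ :=
        le_ciSup (Ordinal.bddAbove_range fun w : W => SR w.1 + 1) (⟨w, hwW'⟩ : W)
      have hlt : SR N < δ := by
        rw [SR_iso hiso]
        exact lt_of_lt_of_le
          (by rw [Ordinal.add_one_eq_succ]; exact Order.lt_succ _) hle
      exact absurd hSR (not_le.mpr hlt)
    exact ⟨δ, hδlt, fun M N hM hN hSM hSN =>
      ((keyN M hM hSM).symm').trans' (keyN N hN hSN)⟩
  · push_neg at hbig
    exfalso
    apply not_countably_of_aleph1 hT.1
    set S'' : Set (Str ar) := {s ∈ S | SatS s T} with hS''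
    have hsm : ∀ s : S'', Small s.1 := fun s => hbig s.1 s.2.2
    choose Wf hWfc hWfcov using hsm
    haveI : Countable S'' := (hSc.mono fun x hx => hx.1).to_subtype
    refine ⟨⋃ s : S'', Wf s, Set.countable_iUnion hWfc, fun A hA => ?_⟩
    obtain ⟨s, hsS, hsT, hseq⟩ := hScov A hA
    obtain ⟨w, hwW, hiso⟩ := hWfcov ⟨s, ⟨hsS, hsT⟩⟩ A hA hseq.symm'
    exact ⟨w, Set.mem_iUnion.2 ⟨_, hwW⟩, hiso⟩

end VaughtAux

/-- If `T` is a minimal counterexample to Vaught's conjecture, there is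
a club `C ⊆ ω₁` such that for every `α ∈ C`, any two countable models of `T` of Scott
rank at least `α` are `Σ^in_β`-elementary equivalent for all `β < α`. -/
theorem minimal_cex_club {ar : ℕ → ℕ} (T : IForm ar) (hT : MinimalCex T) :
    ∃ C : Set Ordinal,
      (∀ α ∈ C, α < (Cardinal.aleph 1).ord) ∧
      (∀ β < (Cardinal.aleph 1).ord, ∃ α ∈ C, β < α) ∧
      (∀ s : Set Ordinal, s ⊆ C → s.Nonempty → sSup s < (Cardinal.aleph 1).ord →
        sSup s ∈ C) ∧
      (∀ α ∈ C, ∀ A B : Str ar, SatS A T → SatS B T → α ≤ SR A → α ≤ SR B →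
        ∀ β < α, SigEquiv β A B) := by 
  classical
  have key : ∀ β : Ordinal.{0}, ∃ δ : Ordinal.{0}, δ < (Cardinal.aleph 1).ord ∧
      (β < (Cardinal.aleph 1).ord → ∀ M N : Str ar, SatS M T → SatS N T →
        δ ≤ SR M → δ ≤ SR N → SigEquiv β M N) := by
    intro β
    by_cases hβ : β < (Cardinal.aleph 1).ord
    · obtain ⟨δ, h1, h2⟩ := key_level hT hβ
      exact ⟨δ, h1, fun _ => h2⟩
    · exact ⟨0, omega1_pos, fun h => absurd h hβ⟩
  choose G hG1 hG2 using key
  have bnd : ∀ γ : Ordinal.{0}, γ < (Cardinal.aleph 1).ord →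
      ∃ δ : Ordinal.{0}, δ < (Cardinal.aleph 1).ord ∧ ∀ β < γ, G β < δ := by
    intro γ hγ
    have hcard : Cardinal.mk γ.ToType < Cardinal.aleph 1 := by
      rw [Cardinal.mk_toType]
      exact Cardinal.lt_ord.mp hγ
    refine ⟨⨆ x : γ.ToType, G ((Ordinal.ToType.mk (o := γ)).symm x).1 + 1, ?_, ?_⟩
    · exact Cardinal.iSup_lt_ord_of_isRegular Cardinal.isRegular_aleph_one hcard
        (fun x => succ_lt_omega1 (hG1 _))
    · intro β hβ
      have hle : G ((Ordinal.ToType.mk (o := γ)).symm ((Ordinal.ToType.mk (o := γ)) ⟨β, hβ⟩)).1 + 1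
          ≤ ⨆ x : γ.ToType, G ((Ordinal.ToType.mk (o := γ)).symm x).1 + 1 :=
        le_ciSup (Ordinal.bddAbove_range _) _
      rw [OrderIso.symm_apply_apply] at hle
      exact lt_of_lt_of_le (by rw [Ordinal.add_one_eq_succ]; exact Order.lt_succ _) hle
  refine ⟨{α : Ordinal | α < (Cardinal.aleph 1).ord ∧ ∀ β < α, G β < α},
    fun α h => h.1, ?_, ?_, ?_⟩
  · intro β₀ hβ₀
    set F : {o : Ordinal.{0} // o < (Cardinal.aleph 1).ord} →
        {o : Ordinal.{0} // o < (Cardinal.aleph 1).ord} := fun γ =>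
      ⟨max (γ.1 + 1) (bnd γ.1 γ.2).choose,
        max_lt (succ_lt_omega1 γ.2) (bnd γ.1 γ.2).choose_spec.1⟩ with hF
    set f : ℕ → {o : Ordinal.{0} // o < (Cardinal.aleph 1).ord} :=
      fun n => F^[n] ⟨β₀ + 1, succ_lt_omega1 hβ₀⟩ with hf
    have hstep : ∀ n, f (n + 1) = F (f n) := fun n => Function.iterate_succ_apply' F n _
    have hbnd : ∀ n β, β < (f n).1 → G β < (f (n+1)).1 := by
      intro n β hβ
      rw [hstep n]
      exact lt_of_lt_of_le ((bnd (f n).1 (f n).2).choose_spec.2 β hβ) (le_max_right _ _)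
    have hαlt : (⨆ n, (f n).1) < (Cardinal.aleph 1).ord :=
      iSup_countable_lt_omega1 fun n => (f n).2
    refine ⟨⨆ n, (f n).1, ⟨hαlt, ?_⟩, ?_⟩
    · intro β hβ
      obtain ⟨n, hn⟩ := (lt_ciSup_iff (Ordinal.bddAbove_range _)).mp hβ
      exact lt_of_lt_of_le (hbnd n β hn)
        (le_ciSup (Ordinal.bddAbove_range fun n => (f n).1) (n+1))
    · have h0 : (f 0).1 = β₀ + 1 := rfl
      have hle : (f 0).1 ≤ ⨆ n, (f n).1 :=
        le_ciSup (Ordinal.bddAbove_range fun n => (f n).1) 0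
      rw [h0] at hle
      exact lt_of_lt_of_le (by rw [Ordinal.add_one_eq_succ]; exact Order.lt_succ _) hle
  · intro s hsub hne hlt
    refine ⟨hlt, fun β hβ => ?_⟩
    obtain ⟨x, hxs, hx⟩ : ∃ x ∈ s, β < x := by
      by_contra hc
      push_neg at hc
      exact absurd (csSup_le hne hc) (not_le.mpr hβ)
    exact lt_of_lt_of_le ((hsub hxs).2 β hx)
      (le_csSup ⟨(Cardinal.aleph 1).ord, fun y hy => (hsub hy).1.le⟩ hxs)
  · intro α hα A B hA hB hSRA hSRB β hβ
    have hβ1 : β < (Cardinal.aleph 1).ord := hβ.trans hα.1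
    exact hG2 β hβ1 A B hA hB ((hα.2 β hβ).le.trans hSRA) ((hα.2 β hβ).le.trans hSRB)
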